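/- At any step of the PPE construction, a non-degenerate Newcombian Class is characterized by its worst payoff: if two Newcombian States η, η' have nonempty target sets whose minimum payoffs (with respect to the current player) are equal, then their target sets are equal. -/
import Mathlib


open Classical

section PPE

variable {O C : Type*} [Fintype O] [DecidableEq O] [DecidableEq C]

/-- Target set of a Newcombian State (a list of children of the current node),
defined recursively from the remaining-outcome set `I`, the descendant map `D`
and the current player's payoff `pay`. -/
noncomputable def target (I : Finset O) (D : C → Finset O) (pay : O → ℤ) :
    List C → Finset O
  | [] => ∅
  | [n] => I ∩ D n
  | n :: m :: p =>
      let Tp := target I D pay (m :: p)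
      (I ∩ D n).filter (fun o => ¬ (Tp.Nonempty ∧ ∀ o' ∈ Tp, pay o < pay o'))

/-- A Newcombian State at the current node: a nonempty list of children with no
two consecutive elements equal. -/
def ValidState (F : Finset C) (η : List C) : Prop :=
  η ≠ [] ∧ (∀ n ∈ η, n ∈ F) ∧ η.Chain' (· ≠ ·)

/-- `o` is discarded by some Newcombian State at the current node. -/
def Discards (I : Finset O) (D : C → Finset O) (pay : O → ℤ) (F : Finset C)
    (o : O) : Prop :=
  ∃ n p, ValidState F (n :: p) ∧ o ∈ I ∧ o ∉ D n ∧
    (target I D pay (n :: p)).Nonempty ∧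
    ∀ o' ∈ target I D pay (n :: p), pay o < pay o'

/-- The set of outcomes remaining after the discarding process at the current node. -/
noncomputable def survivors (I : Finset O) (D : C → Finset O) (pay : O → ℤ)
    (F : Finset C) : Finset O :=
  I.filter (fun o => ¬ Discards I D pay F o)

/-- Worst payoff of a Newcombian State. -/
noncomputable def wp (I : Finset O) (D : C → Finset O) (pay : O → ℤ)
    (η : List C) : ℤ :=
  sInf (pay '' (target I D pay η : Set O))

lemma target_subset (I : Finset O) (D : C → Finset O) (pay : O → ℤ) (n : C) (p : List C) :
    target I D pay (n :: p) ⊆ I ∩ D n := by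
  cases p with
  | nil => simp [target]
  | cons m q =>
      intro o ho
      simp only [target] at ho
      exact Finset.mem_of_mem_filter o ho

lemma target_eq_filter (I : Finset O) (D : C → Finset O) (pay : O → ℤ)
    (n : C) (p : List C) (h : (target I D pay (n :: p)).Nonempty) :
    target I D pay (n :: p)
      = (I ∩ D n).filter
          (fun o => ((target I D pay (n :: p)).image pay).min' (h.image pay) ≤ pay o) := by
  set T := target I D pay (n :: p) with hT
  set m := (T.image pay).min' (h.image pay) with hm
  obtain ⟨ostar, hostar, hpstar⟩ := Finset.mem_image.1 ((T.image pay).min'_mem (h.image pay))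
  ext o
  constructor
  · intro ho
    refine Finset.mem_filter.2 ⟨target_subset I D pay n p ho, ?_⟩
    exact Finset.min'_le _ _ (Finset.mem_image_of_mem pay ho)
  · intro ho
    obtain ⟨hoI, hmo⟩ := Finset.mem_filter.1 ho
    cases p with
    | nil => simpa [hT, target] using hoI
    | cons c q =>
        have hstar := hostar
        simp only [hT, target, Finset.mem_filter] at hstar ⊢
        refine ⟨hoI, ?_⟩
        intro ⟨hne, hlt⟩
        exact hstar.2 ⟨hne, fun o' ho' => lt_of_le_of_lt (hpstar ▸ hmo) (hlt o' ho')⟩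

end PPE

/-- a non-degenerate Newcombian Class is characterized by its worst
payoff: two Newcombian States with nonempty target sets having the same minimum
payoff for the current player have equal target sets. -/
theorem nondegenerate_class_characterized_by_worst_payoff
    {O C : Type*} [Fintype O] [DecidableEq O] [DecidableEq C]
    (I : Finset O) (D : C → Finset O) (pay : O → ℤ) (F : Finset C)
    (hI : I.Nonempty)
    (hcov : ∀ o ∈ I, ∃ c ∈ F, o ∈ D c)
    (hdisj : ∀ c c' : C, c ≠ c' → Disjoint (D c) (D c'))
    (hpay : Function.Injective pay)
    (η η' : List C) (hv : ValidState F η) (hv' : ValidState F η')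
    (h : (target I D pay η).Nonempty) (h' : (target I D pay η').Nonempty)
    (hmin : ((target I D pay η).image pay).min' (h.image pay)
          = ((target I D pay η').image pay).min' (h'.image pay)) :
    target I D pay η = target I D pay η' := by
  obtain ⟨n, p, rfl⟩ : ∃ n p, η = n :: p := by
    cases η with
    | nil => exact absurd rfl hv.1
    | cons n p => exact ⟨n, p, rfl⟩
  obtain ⟨n', p', rfl⟩ : ∃ n' p', η' = n' :: p' := by
    cases η' with
    | nil => exact absurd rfl hv'.1
    | cons n' p' => exact ⟨n', p', rfl⟩
  -- argmins
  obtain ⟨o₁, ho₁, hpo₁⟩ := Finset.mem_image.1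
    (((target I D pay (n :: p)).image pay).min'_mem (h.image pay))
  obtain ⟨o₂, ho₂, hpo₂⟩ := Finset.mem_image.1
    (((target I D pay (n' :: p')).image pay).min'_mem (h'.image pay))
  have ho12 : o₁ = o₂ := hpay (by rw [hpo₁, hpo₂, hmin])
  have hD1 : o₁ ∈ D n := (Finset.mem_inter.1 (target_subset I D pay n p ho₁)).2
  have hD2 : o₁ ∈ D n' := by
    rw [ho12]; exact (Finset.mem_inter.1 (target_subset I D pay n' p' ho₂)).2
  have hnn : n = n' := by
    by_contra hne
    exact Finset.disjoint_left.1 (hdisj n n' hne) hD1 hD2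
  rw [target_eq_filter I D pay n p h, target_eq_filter I D pay n' p' h', hmin, hnn]
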